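/- Let g₁, g₂, g₃ ∈ L²(ℝ) be nonnegative measurable functions and let E ⊆ ℝ² be a measurable set of finite Lebesgue measure |E|. Then ∬_E g₁(x) g₂(y) g₃(x+y) dx dy ≤ |E|^{1/4} ‖g₁‖_{L²(ℝ)} ‖g₂‖_{L²(ℝ)} ‖g₃‖_{L²(ℝ)}. -/

import Mathlib

open MeasureTheory ENNReal

-- Cauchy–Schwarz for lintegral
lemma myCS {α : Type*} [MeasurableSpace α] (μ : Measure α) {f g : α → ℝ≥0∞}
    (hf : AEMeasurable f μ) (hg : AEMeasurable g μ) :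
    ∫⁻ a, f a * g a ∂μ ≤
      (∫⁻ a, f a ^ (2:ℝ) ∂μ) ^ ((1:ℝ)/2) * (∫⁻ a, g a ^ (2:ℝ) ∂μ) ^ ((1:ℝ)/2) := by
  have h22 : Real.HolderConjugate 2 2 := ⟨by norm_num, by norm_num, by norm_num⟩
  simpa using ENNReal.lintegral_mul_le_Lp_mul_Lq μ h22 hf hg

/-- the Hölder/Young step in the proof of Lemma "first": for nonnegative
`g₁, g₂, g₃ ∈ L²(ℝ)` and a measurable set `E ⊆ ℝ²` of finite measure,
`∬_E g₁(x)g₂(y)g₃(x+y) dx dy ≤ |E|^{1/4} ‖g₁‖₂ ‖g₂‖₂ ‖g₃‖₂`. -/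
theorem stmt_14 (g₁ g₂ g₃ : ℝ → ℝ)
    (h₁ : MemLp g₁ 2 volume) (h₂ : MemLp g₂ 2 volume) (h₃ : MemLp g₃ 2 volume)
    (hn₁ : ∀ x, 0 ≤ g₁ x) (hn₂ : ∀ x, 0 ≤ g₂ x) (hn₃ : ∀ x, 0 ≤ g₃ x)
    (E : Set (ℝ × ℝ)) (hE : MeasurableSet E) (hEfin : volume E < ⊤) :
    (∫ p in E, g₁ p.1 * g₂ p.2 * g₃ (p.1 + p.2)) ≤
      (volume E).toReal ^ ((1 : ℝ) / 4) * ((eLpNorm g₁ 2 volume).toReal *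
        (eLpNorm g₂ 2 volume).toReal * (eLpNorm g₃ 2 volume).toReal) := by
  -- measurable representatives
  set f₁ := h₁.1.mk g₁ with hf₁def
  set f₂ := h₂.1.mk g₂ with hf₂def
  set f₃ := h₃.1.mk g₃ with hf₃def
  have hf₁m : Measurable f₁ := h₁.1.stronglyMeasurable_mk.measurable
  have hf₂m : Measurable f₂ := h₂.1.stronglyMeasurable_mk.measurable
  have hf₃m : Measurable f₃ := h₃.1.stronglyMeasurable_mk.measurable
  have hf₁e : g₁ =ᵐ[volume] f₁ := h₁.1.ae_eq_mk
  have hf₂e : g₂ =ᵐ[volume] f₂ := h₂.1.ae_eq_mk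
  have hf₃e : g₃ =ᵐ[volume] f₃ := h₃.1.ae_eq_mk
  set F₁ : ℝ → ℝ≥0∞ := fun x => ENNReal.ofReal (f₁ x) with hF₁def
  set F₂ : ℝ → ℝ≥0∞ := fun x => ENNReal.ofReal (f₂ x) with hF₂def
  set F₃ : ℝ → ℝ≥0∞ := fun x => ENNReal.ofReal (f₃ x) with hF₃def
  have hF₁m : Measurable F₁ := ENNReal.measurable_ofReal.comp hf₁m
  have hF₂m : Measurable F₂ := ENNReal.measurable_ofReal.comp hf₂m
  have hF₃m : Measurable F₃ := ENNReal.measurable_ofReal.comp hf₃m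
  have hF₁e : (fun x => ENNReal.ofReal (g₁ x)) =ᵐ[volume] F₁ :=
    hf₁e.mono fun x hx => by simp [hF₁def, ← hx]
  have hF₂e : (fun x => ENNReal.ofReal (g₂ x)) =ᵐ[volume] F₂ :=
    hf₂e.mono fun x hx => by simp [hF₂def, ← hx]
  have hF₃e : (fun x => ENNReal.ofReal (g₃ x)) =ᵐ[volume] F₃ :=
    hf₃e.mono fun x hx => by simp [hF₃def, ← hx]
  -- L² norms
  set M₁ : ℝ≥0∞ := ∫⁻ x, F₁ x ^ (2:ℝ) with hM₁def
  set M₂ : ℝ≥0∞ := ∫⁻ x, F₂ x ^ (2:ℝ) with hM₂def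
  set M₃ : ℝ≥0∞ := ∫⁻ x, F₃ x ^ (2:ℝ) with hM₃def
  have hNorm : ∀ (g : ℝ → ℝ) (F : ℝ → ℝ≥0∞), (∀ x, 0 ≤ g x) →
      ((fun x => ENNReal.ofReal (g x)) =ᵐ[volume] F) →
      eLpNorm g 2 volume = (∫⁻ x, F x ^ (2:ℝ)) ^ ((1:ℝ)/2) := by
    intro g F hn he
    rw [eLpNorm_eq_lintegral_rpow_enorm_toReal (by norm_num) (by norm_num)]
    simp only [ENNReal.toReal_ofNat]
    congr 1
    refine lintegral_congr_ae (he.mono fun x hx => ?_)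
    simp only at hx ⊢
    rw [← hx, Real.enorm_eq_ofReal (hn x)]
  have hN₁ : eLpNorm g₁ 2 volume = M₁ ^ ((1:ℝ)/2) := hNorm g₁ F₁ hn₁ hF₁e
  have hN₂ : eLpNorm g₂ 2 volume = M₂ ^ ((1:ℝ)/2) := hNorm g₂ F₂ hn₂ hF₂e
  have hN₃ : eLpNorm g₃ 2 volume = M₃ ^ ((1:ℝ)/2) := hNorm g₃ F₃ hn₃ hF₃e
  have hM₁top : M₁ ≠ ⊤ := by
    intro h
    have := h₁.2
    rw [hN₁, h] at this
    simp [ENNReal.top_rpow_of_pos (by norm_num : (0:ℝ) < 1/2)] at this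
  have hM₂top : M₂ ≠ ⊤ := by
    intro h
    have := h₂.2
    rw [hN₂, h] at this
    simp [ENNReal.top_rpow_of_pos (by norm_num : (0:ℝ) < 1/2)] at this
  have hM₃top : M₃ ≠ ⊤ := by
    intro h
    have := h₃.2
    rw [hN₃, h] at this
    simp [ENNReal.top_rpow_of_pos (by norm_num : (0:ℝ) < 1/2)] at this
  -- the product measure
  set ν : Measure (ℝ × ℝ) := (volume : Measure ℝ).prod volume with hνdef
  have hvol : (volume : Measure (ℝ × ℝ)) = ν := rfl
  -- quasi measure preserving maps
  have hq1 : Measure.QuasiMeasurePreserving (Prod.fst : ℝ × ℝ → ℝ) ν volume :=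
    Measure.quasiMeasurePreserving_fst
  have hq2 : Measure.QuasiMeasurePreserving (Prod.snd : ℝ × ℝ → ℝ) ν volume :=
    Measure.quasiMeasurePreserving_snd
  have hq3 : Measure.QuasiMeasurePreserving (fun p : ℝ × ℝ => p.1 + p.2) ν volume :=
    hq1.comp (measurePreserving_add_prod volume volume).quasiMeasurePreserving
  -- a.e. identification of the integrand
  have hae : (fun p : ℝ × ℝ => ENNReal.ofReal (g₁ p.1 * g₂ p.2 * g₃ (p.1 + p.2)))
      =ᵐ[ν] (fun p => F₁ p.1 * F₂ p.2 * F₃ (p.1 + p.2)) := by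
    have e1 : (fun p : ℝ × ℝ => ENNReal.ofReal (g₁ p.1)) =ᵐ[ν] fun p => F₁ p.1 :=
      hq1.ae_eq_comp hF₁e
    have e2 : (fun p : ℝ × ℝ => ENNReal.ofReal (g₂ p.2)) =ᵐ[ν] fun p => F₂ p.2 :=
      hq2.ae_eq_comp hF₂e
    have e3 : (fun p : ℝ × ℝ => ENNReal.ofReal (g₃ (p.1 + p.2))) =ᵐ[ν]
        fun p => F₃ (p.1 + p.2) := hq3.ae_eq_comp hF₃e
    filter_upwards [e1, e2, e3] with p w1 w2 w3
    rw [ENNReal.ofReal_mul (mul_nonneg (hn₁ _) (hn₂ _)),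
      ENNReal.ofReal_mul (hn₁ _), w1, w2, w3]
  -- names for integrand and the two Cauchy–Schwarz factors
  set Phi : ℝ × ℝ → ℝ≥0∞ := fun p => F₁ p.1 * F₂ p.2 * F₃ (p.1 + p.2) with hPhidef
  have h12m : Measurable fun p : ℝ × ℝ => F₁ p.1 * F₂ p.2 :=
    (hF₁m.comp measurable_fst).mul (hF₂m.comp measurable_snd)
  have h3m : Measurable fun p : ℝ × ℝ => F₃ (p.1 + p.2) :=
    hF₃m.comp (measurable_fst.add measurable_snd)
  have hPhim : Measurable Phi := h12m.mul h3m
  set A : ℝ≥0∞ := ∫⁻ p in E, F₁ p.1 * F₂ p.2 * F₃ (p.1 + p.2) ^ (2:ℝ) ∂ν with hAdef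
  set B : ℝ≥0∞ := ∫⁻ p in E, F₁ p.1 * F₂ p.2 ∂ν with hBdef
  -- rpow facts
  have key3 : ∀ a : ℝ≥0∞, (a ^ ((1:ℝ)/2)) ^ (2:ℝ) = a := by
    intro a; rw [← ENNReal.rpow_mul]; norm_num
  have key : ∀ a b : ℝ≥0∞, (a ^ ((1:ℝ)/2) * b) * a ^ ((1:ℝ)/2) = a * b := by
    intro a b
    rw [mul_right_comm, ← ENNReal.rpow_add_of_nonneg _ _ (by norm_num) (by norm_num)]
    norm_num
  have key2 : ∀ a b : ℝ≥0∞, (a ^ ((1:ℝ)/2) * b) ^ (2:ℝ) = a * b ^ (2:ℝ) := by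
    intro a b
    rw [ENNReal.mul_rpow_of_nonneg _ _ (by norm_num), key3]
  -- Step 1 : Cauchy–Schwarz splitting off the square of F₃
  have step1 : ∫⁻ p in E, Phi p ∂ν ≤ A ^ ((1:ℝ)/2) * B ^ ((1:ℝ)/2) := by
    have h := myCS (ν.restrict E)
      (f := fun p : ℝ × ℝ => (F₁ p.1 * F₂ p.2) ^ ((1:ℝ)/2) * F₃ (p.1 + p.2))
      (g := fun p : ℝ × ℝ => (F₁ p.1 * F₂ p.2) ^ ((1:ℝ)/2))
      ((h12m.pow_const _).mul h3m).aemeasurable (h12m.pow_const _).aemeasurable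
    simpa only [key, key2, key3, hPhidef, ← hAdef, ← hBdef] using h
  -- Step 2 : B ≤ |E|^{1/2} (M₁ M₂)^{1/2}
  have step2 : B ≤ (ν E) ^ ((1:ℝ)/2) * (M₁ * M₂) ^ ((1:ℝ)/2) := by
    have hB' : B = ∫⁻ p, E.indicator (fun _ => (1:ℝ≥0∞)) p * (F₁ p.1 * F₂ p.2) ∂ν := by
      rw [hBdef, ← lintegral_indicator hE]
      refine lintegral_congr fun p => ?_
      by_cases hp : p ∈ E <;> simp [Set.indicator, hp]
    rw [hB']
    have h := myCS ν
      (f := fun p : ℝ × ℝ => E.indicator (fun _ => (1:ℝ≥0∞)) p)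
      (g := fun p : ℝ × ℝ => F₁ p.1 * F₂ p.2)
      ((measurable_const.indicator hE)).aemeasurable h12m.aemeasurable
    refine h.trans ?_
    have e1 : ∫⁻ p, E.indicator (fun _ => (1:ℝ≥0∞)) p ^ (2:ℝ) ∂ν = ν E := by
      have : ∀ p : ℝ × ℝ, E.indicator (fun _ => (1:ℝ≥0∞)) p ^ (2:ℝ)
          = E.indicator (fun _ => (1:ℝ≥0∞)) p := by
        intro p
        by_cases hp : p ∈ E <;>
          simp [Set.indicator, hp, ENNReal.zero_rpow_of_pos (by norm_num : (0:ℝ) < 2)]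
      simp_rw [this]
      rw [lintegral_indicator hE]
      simp
    have e2 : ∫⁻ p : ℝ × ℝ, (F₁ p.1 * F₂ p.2) ^ (2:ℝ) ∂ν = M₁ * M₂ := by
      simp_rw [ENNReal.mul_rpow_of_nonneg _ _ (by norm_num : (0:ℝ) ≤ 2)]
      exact lintegral_prod_mul (hF₁m.pow_const _).aemeasurable (hF₂m.pow_const _).aemeasurable
    rw [e1, e2]
  -- convolution bound
  have conv_bound : ∀ u : ℝ,
      (∫⁻ x, F₁ x * F₂ (u - x)) ≤ M₁ ^ ((1:ℝ)/2) * M₂ ^ ((1:ℝ)/2) := by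
    intro u
    have hsub : Measurable fun x : ℝ => F₂ (u - x) :=
      hF₂m.comp (measurable_const.sub measurable_id)
    have h := myCS volume hF₁m.aemeasurable hsub.aemeasurable
    refine h.trans ?_
    have e2 : (∫⁻ x, F₂ (u - x) ^ (2:ℝ)) = M₂ :=
      (Measure.measurePreserving_sub_left volume u).lintegral_comp (hF₂m.pow_const _)
    rw [e2]
  -- Step 3 : A ≤ M₁^{1/2} M₂^{1/2} M₃
  have step3 : A ≤ M₁ ^ ((1:ℝ)/2) * M₂ ^ ((1:ℝ)/2) * M₃ := by
    have hAle : A ≤ ∫⁻ p, F₁ p.1 * F₂ p.2 * F₃ (p.1 + p.2) ^ (2:ℝ) ∂ν :=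
      setLIntegral_le_lintegral _ _
    refine hAle.trans ?_
    have hintm : Measurable fun p : ℝ × ℝ => F₁ p.1 * F₂ p.2 * F₃ (p.1 + p.2) ^ (2:ℝ) :=
      h12m.mul (h3m.pow_const _)
    rw [lintegral_prod _ hintm.aemeasurable]
    have hswap : ∀ x : ℝ, (∫⁻ y, F₁ x * F₂ y * F₃ (x + y) ^ (2:ℝ))
        = ∫⁻ u, F₃ u ^ (2:ℝ) * (F₁ x * F₂ (u - x)) := by
      intro x
      rw [← lintegral_add_left_eq_self (fun u => F₃ u ^ (2:ℝ) * (F₁ x * F₂ (u - x))) x]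
      refine lintegral_congr fun y => ?_
      rw [add_sub_cancel_left]
      ring
    simp_rw [hswap]
    rw [lintegral_lintegral_swap]
    · have pull : ∀ u : ℝ, (∫⁻ x, F₃ u ^ (2:ℝ) * (F₁ x * F₂ (u - x)))
          = F₃ u ^ (2:ℝ) * ∫⁻ x, F₁ x * F₂ (u - x) := by
        intro u
        exact lintegral_const_mul _ (hF₁m.mul (hF₂m.comp (measurable_const.sub measurable_id)))
      calc (∫⁻ u, ∫⁻ x, F₃ u ^ (2:ℝ) * (F₁ x * F₂ (u - x)))
          = ∫⁻ u, F₃ u ^ (2:ℝ) * ∫⁻ x, F₁ x * F₂ (u - x) := by simp_rw [pull]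
        _ ≤ ∫⁻ u, F₃ u ^ (2:ℝ) * (M₁ ^ ((1:ℝ)/2) * M₂ ^ ((1:ℝ)/2)) :=
            lintegral_mono fun u => mul_le_mul_right (conv_bound u) _
        _ = M₁ ^ ((1:ℝ)/2) * M₂ ^ ((1:ℝ)/2) * M₃ := by
            rw [lintegral_mul_const _ (hF₃m.pow_const _)]
            ring
    · exact ((hF₃m.comp measurable_snd).pow_const _).mul
        ((hF₁m.comp measurable_fst).mul
          (hF₂m.comp (measurable_snd.sub measurable_fst))) |>.aemeasurable
  -- combine
  have main : (∫⁻ p in E, Phi p ∂ν) ≤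
      (ν E) ^ ((1:ℝ)/4) * (M₁ ^ ((1:ℝ)/2) * M₂ ^ ((1:ℝ)/2) * M₃ ^ ((1:ℝ)/2)) := by
    refine step1.trans ?_
    have h1 : A ^ ((1:ℝ)/2) ≤ (M₁ ^ ((1:ℝ)/2) * M₂ ^ ((1:ℝ)/2) * M₃) ^ ((1:ℝ)/2) :=
      ENNReal.rpow_le_rpow step3 (by norm_num)
    have h2 : B ^ ((1:ℝ)/2) ≤ ((ν E) ^ ((1:ℝ)/2) * (M₁ * M₂) ^ ((1:ℝ)/2)) ^ ((1:ℝ)/2) :=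
      ENNReal.rpow_le_rpow step2 (by norm_num)
    refine (mul_le_mul' h1 h2).trans_eq ?_
    have hmul : ∀ a b : ℝ≥0∞, ∀ c : ℝ, 0 ≤ c → (a * b) ^ c = a ^ c * b ^ c := fun a b c hc =>
      ENNReal.mul_rpow_of_nonneg _ _ hc
    simp only [show ∀ a b : ℝ≥0∞, (a * b) ^ ((1:ℝ)/2) = a ^ ((1:ℝ)/2) * b ^ ((1:ℝ)/2)
        from fun a b => hmul a b _ (by norm_num), ← ENNReal.rpow_mul]
    norm_num
    have hadd : ∀ a : ℝ≥0∞, a ^ ((1:ℝ)/4) * a ^ ((1:ℝ)/4) = a ^ ((1:ℝ)/2) := by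
      intro a
      rw [← ENNReal.rpow_add_of_nonneg _ _ (by norm_num) (by norm_num)]
      norm_num
    calc M₁ ^ ((1:ℝ)/4) * M₂ ^ ((1:ℝ)/4) * M₃ ^ ((1:ℝ)/2) * (ν E ^ ((1:ℝ)/4) * (M₁ ^ ((1:ℝ)/4) * M₂ ^ ((1:ℝ)/4)))
        = ν E ^ ((1:ℝ)/4) * ((M₁ ^ ((1:ℝ)/4) * M₁ ^ ((1:ℝ)/4)) * (M₂ ^ ((1:ℝ)/4) * M₂ ^ ((1:ℝ)/4)) * M₃ ^ ((1:ℝ)/2)) := by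
          ring
      _ = ν E ^ ((1:ℝ)/4) * (M₁ ^ ((1:ℝ)/2) * M₂ ^ ((1:ℝ)/2) * M₃ ^ ((1:ℝ)/2)) := by
          rw [hadd, hadd]
  -- identify the Bochner integral with the lintegral
  rw [hvol]
  have haesm : AEStronglyMeasurable (fun p : ℝ × ℝ => g₁ p.1 * g₂ p.2 * g₃ (p.1 + p.2))
      (ν.restrict E) := by
    have heq : (fun p : ℝ × ℝ => g₁ p.1 * g₂ p.2 * g₃ (p.1 + p.2))
        =ᵐ[ν] fun p => f₁ p.1 * f₂ p.2 * f₃ (p.1 + p.2) := by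
      filter_upwards [hq1.ae_eq_comp hf₁e, hq2.ae_eq_comp hf₂e, hq3.ae_eq_comp hf₃e]
        with p w1 w2 w3
      simp only [Function.comp] at w1 w2 w3
      rw [w1, w2, w3]
    exact (((hf₁m.comp measurable_fst).mul (hf₂m.comp measurable_snd)).mul
      (hf₃m.comp (measurable_fst.add measurable_snd))).aestronglyMeasurable.congr
      (ae_restrict_of_ae heq.symm)
  have hnn : 0 ≤ᵐ[ν.restrict E] fun p : ℝ × ℝ => g₁ p.1 * g₂ p.2 * g₃ (p.1 + p.2) :=
    Filter.Eventually.of_forall fun p => mul_nonneg (mul_nonneg (hn₁ _) (hn₂ _)) (hn₃ _)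
  rw [integral_eq_lintegral_of_nonneg_ae hnn haesm]
  have hlint_eq : (∫⁻ p in E, ENNReal.ofReal (g₁ p.1 * g₂ p.2 * g₃ (p.1 + p.2)) ∂ν)
      = ∫⁻ p in E, Phi p ∂ν := lintegral_congr_ae (ae_restrict_of_ae hae)
  rw [hlint_eq]
  -- pass to reals
  have hE' : ν E ≠ ⊤ := by rw [← hvol]; exact hEfin.ne
  have hRtop : (ν E) ^ ((1:ℝ)/4) * (M₁ ^ ((1:ℝ)/2) * M₂ ^ ((1:ℝ)/2) * M₃ ^ ((1:ℝ)/2)) ≠ ⊤ := by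
    refine ENNReal.mul_ne_top (ENNReal.rpow_ne_top_of_nonneg (by norm_num) hE') ?_
    exact ENNReal.mul_ne_top
      (ENNReal.mul_ne_top (ENNReal.rpow_ne_top_of_nonneg (by norm_num) hM₁top)
        (ENNReal.rpow_ne_top_of_nonneg (by norm_num) hM₂top))
      (ENNReal.rpow_ne_top_of_nonneg (by norm_num) hM₃top)
  refine (ENNReal.toReal_mono hRtop main).trans_eq ?_
  rw [ENNReal.toReal_mul, ENNReal.toReal_mul, ENNReal.toReal_mul, hN₁, hN₂, hN₃,
    ← ENNReal.toReal_rpow]
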